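/- For every l ≥ 0, every m ≥ 1, and every k with 0 ≤ k ≤ l, the polynomial Φ_m(q)^{f(l,m)} divides {l−k}_q! · {k}_q! in ℤ[q], where f(l,m) = max(0, ⌊(l+1)/m⌋ − 1). Consequently the ideal I_l of ℤ[q,q^{-1}] generated by the elements {l−k}_q!{k}_q!, k = 0,…,l, is contained in the principal ideal generated by ∏_{m≥1} Φ_m(q)^{f(l,m)}. -/

import Mathlib

open Polynomial LaurentPolynomial

private lemma cyclo_pow_dvd_qfac (m n : ℕ) :
    (cyclotomic m ℤ) ^ (n / m) ∣ ∏ i ∈ Finset.range n, (X ^ (i + 1) - 1 : ℤ[X]) := by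
  classical
  have hcard : ({i ∈ Finset.range n | m ∣ i + 1} : Finset ℕ).card = n / m :=
    Nat.card_multiples n m
  calc (cyclotomic m ℤ) ^ (n / m)
      = ∏ i ∈ {i ∈ Finset.range n | m ∣ i + 1}, cyclotomic m ℤ := by
        rw [Finset.prod_const, hcard]
    _ ∣ ∏ i ∈ {i ∈ Finset.range n | m ∣ i + 1}, (X ^ (i + 1) - 1 : ℤ[X]) := by
        refine Finset.prod_dvd_prod_of_dvd _ _ fun i hi => ?_
        obtain ⟨c, hc⟩ := (Finset.mem_filter.mp hi).2
        refine (cyclotomic.dvd_X_pow_sub_one m ℤ).trans ?_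
        have := sub_dvd_pow_sub_pow (X ^ m : ℤ[X]) 1 c
        simpa [hc, ← pow_mul] using this
    _ ∣ ∏ i ∈ Finset.range n, (X ^ (i + 1) - 1 : ℤ[X]) :=
        Finset.prod_dvd_prod_of_subset _ _ _ (Finset.filter_subset _ _)

theorem cyclotomic_pow_dvd_qfactorial_mul_and_ideal (l : ℕ) :
    (∀ m : ℕ, 1 ≤ m → ∀ k : ℕ, k ≤ l →
      (cyclotomic m ℤ) ^ ((l + 1) / m - 1) ∣
        (∏ i ∈ Finset.range (l - k), (X ^ (i + 1) - 1 : ℤ[X])) *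
          (∏ i ∈ Finset.range k, (X ^ (i + 1) - 1 : ℤ[X]))) ∧
    Ideal.span ((fun k : ℕ => Polynomial.toLaurent
        ((∏ i ∈ Finset.range (l - k), (X ^ (i + 1) - 1 : ℤ[X])) *
          (∏ i ∈ Finset.range k, (X ^ (i + 1) - 1 : ℤ[X])))) '' {k | k ≤ l}) ≤
      Ideal.span {Polynomial.toLaurent
        (∏ m ∈ Finset.Icc 1 (l + 1), (cyclotomic m ℤ) ^ ((l + 1) / m - 1))} := by
  have key : ∀ m : ℕ, 1 ≤ m → ∀ k : ℕ, k ≤ l →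
      (cyclotomic m ℤ) ^ ((l + 1) / m - 1) ∣
        (∏ i ∈ Finset.range (l - k), (X ^ (i + 1) - 1 : ℤ[X])) *
          (∏ i ∈ Finset.range k, (X ^ (i + 1) - 1 : ℤ[X])) := by
    intro m hm k hk
    have hd := mul_dvd_mul (cyclo_pow_dvd_qfac m (l - k)) (cyclo_pow_dvd_qfac m k)
    rw [← pow_add] at hd
    refine dvd_trans (pow_dvd_pow _ ?_) hd
    have hm0 : 0 < m := hm
    suffices h : (l + 1) / m < (l - k) / m + k / m + 2 from
      Nat.sub_le_of_le_add (Nat.lt_succ_iff.mp h)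
    rw [Nat.div_lt_iff_lt_mul hm0]
    have ha := Nat.div_add_mod (l - k) m
    have hb := Nat.div_add_mod k m
    have ham : (l - k) % m < m := Nat.mod_lt _ hm0
    have hbm : k % m < m := Nat.mod_lt _ hm0
    have hlk : l - k + k = l := Nat.sub_add_cancel hk
    nlinarith [ha, hb, ham, hbm, hlk]
  refine ⟨key, ?_⟩
  rw [Ideal.span_le]
  rintro x ⟨k, hk, rfl⟩
  rw [SetLike.mem_coe, Ideal.mem_span_singleton]
  refine map_dvd Polynomial.toLaurent ?_
  -- divisibility in ℤ[X] via Gauss lemma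
  set P : ℤ[X] := (∏ i ∈ Finset.range (l - k), (X ^ (i + 1) - 1 : ℤ[X])) *
      (∏ i ∈ Finset.range k, (X ^ (i + 1) - 1 : ℤ[X])) with hP
  have hPmonic : P.Monic := by
    refine Monic.mul ?_ ?_ <;>
    · refine monic_prod_of_monic _ _ fun i _ => ?_
      simpa using monic_X_pow_sub_C (1 : ℤ) (Nat.succ_ne_zero i)
  have hDmonic : (∏ m ∈ Finset.Icc 1 (l + 1), (cyclotomic m ℤ) ^ ((l + 1) / m - 1)).Monic :=
    monic_prod_of_monic _ _ fun m _ => (cyclotomic.monic m ℤ).pow _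
  rw [IsPrimitive.Int.dvd_iff_map_cast_dvd_map_cast _ _ hDmonic.isPrimitive,
    Polynomial.map_prod]
  refine Finset.prod_dvd_of_coprime ?_ ?_
  · intro a ha b hb hab
    simp only [Function.onFun, Polynomial.map_pow, map_cyclotomic]
    exact (cyclotomic.isCoprime_rat hab).pow
  · intro m hm
    have := key m (Finset.mem_Icc.mp hm).1 k hk
    have := map_dvd (Polynomial.mapRingHom (Int.castRingHom ℚ)) this
    simpa [hP, Polynomial.map_mul] using this
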